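/- For u, w ∈ S_{[a,n]} and k ∈ [a, n-1], construct u', w' ∈ S_{[a,n+1]} by appending the value n+1 at position k+1 in the one-line notation after position k (i.e., u'(t) = u(t) for a ≤ t ≤ k, u'(k+1) = n+1, u'(t) = u(t-1) for k+1 < t ≤ n+1; similarly for w'). Then u →^k w if and only if u' →^{k+1} w'. -/

import Mathlib

/-- `w` has finitely many non-fixed points. -/
def FinSupp (w : Equiv.Perm ℤ) : Prop := {i : ℤ | w i ≠ i}.Finite

/-- Descent set of a permutation of ℤ. -/
def Des (w : Equiv.Perm ℤ) : Set ℤ := {i : ℤ | w (i + 1) < w i}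

/-- Number of inversions. -/
noncomputable def permLength (w : Equiv.Perm ℤ) : ℕ :=
  {p : ℤ × ℤ | p.1 < p.2 ∧ w p.2 < w p.1}.ncard

/-- Membership in `S_{[a,n]}`: all non-fixed points lie in `[a,n]`. -/
def InS (a n : ℤ) (w : Equiv.Perm ℤ) : Prop := ∀ i : ℤ, w i ≠ i → a ≤ i ∧ i ≤ n

/-- Cover relation of the `k`-Bruhat order. -/
def BCover (k : ℤ) (u w : Equiv.Perm ℤ) : Prop :=
  ∃ i j : ℤ, i ≤ k ∧ k < j ∧ w = u * Equiv.swap i j ∧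
    permLength w = permLength u + 1

/-- The `k`-Bruhat order: reflexive-transitive closure of the cover relation. -/
def kBruhat (k : ℤ) : Equiv.Perm ℤ → Equiv.Perm ℤ → Prop :=
  Relation.ReflTransGen (BCover k)

/-- There is an increasing `k`-chain from `u` to `w`. -/
def IncTo (k : ℤ) (u w : Equiv.Perm ℤ) : Prop :=
  ∃ (m : ℕ) (us : ℕ → Equiv.Perm ℤ) (ab : ℕ → ℤ × ℤ),
    us 0 = u ∧ us m = w ∧
    (∀ i < m, (ab i).1 ≤ k ∧ k < (ab i).2 ∧
      us (i + 1) = us i * Equiv.swap (ab i).1 (ab i).2 ∧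
      permLength (us (i + 1)) = permLength (us i) + 1) ∧
    (∀ i j : ℕ, i < j → j < m → us i (ab i).1 < us j (ab j).1)

/-- `fix_{(lo,hi]}(u,w) = {u(t) : lo < t ≤ hi, u(t) = w(t)}`. -/
def fixSet (lo hi : ℤ) (u w : Equiv.Perm ℤ) : Set ℤ :=
  {m : ℤ | ∃ t : ℤ, lo < t ∧ t ≤ hi ∧ u t = m ∧ w t = m}

namespace BS

def Invs (v : Equiv.Perm ℤ) : Set (ℤ × ℤ) := {p : ℤ × ℤ | p.1 < p.2 ∧ v p.2 < v p.1}

lemma permLength_def (v : Equiv.Perm ℤ) : permLength v = (Invs v).ncard := rfl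

lemma value_bounds {A B : ℤ} {v : Equiv.Perm ℤ} (h : InS A B v) {t : ℤ} (ht : v t ≠ t) :
    A ≤ v t ∧ v t ≤ B := by
  have hvt : v (v t) ≠ v t := by
    intro he
    exact ht (v.injective he)
  exact h _ hvt

lemma apply_le {A B : ℤ} {v : Equiv.Perm ℤ} (h : InS A B v) {t : ℤ} (ht : t ≤ B) : v t ≤ B := by
  by_cases hv : v t = t
  · omega
  · exact (value_bounds h hv).2

lemma apply_ge {A B : ℤ} {v : Equiv.Perm ℤ} (h : InS A B v) {t : ℤ} (ht : A ≤ t) : A ≤ v t := by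
  by_cases hv : v t = t
  · omega
  · exact (value_bounds h hv).1

lemma apply_eq_of_lt {A B : ℤ} {v : Equiv.Perm ℤ} (h : InS A B v) {t : ℤ} (ht : t < A) :
    v t = t := by
  by_contra hv; have := h t hv; omega

lemma apply_eq_of_gt {A B : ℤ} {v : Equiv.Perm ℤ} (h : InS A B v) {t : ℤ} (ht : B < t) :
    v t = t := by
  by_contra hv; have := h t hv; omega

lemma invs_subset {A B : ℤ} {v : Equiv.Perm ℤ} (h : InS A B v) :
    Invs v ⊆ Set.Icc A B ×ˢ Set.Icc A B := by
  rintro ⟨p, q⟩ ⟨hpq, hvv⟩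
  simp only at hpq hvv ⊢
  have hAp : A ≤ p := by
    by_contra hc
    push_neg at hc
    have hvp : v p = p := apply_eq_of_lt h hc
    have hq : v q ≠ q := by intro he; omega
    have := (value_bounds h hq).1
    omega
  have hqB : q ≤ B := by
    by_contra hc
    push_neg at hc
    have hvq : v q = q := apply_eq_of_gt h hc
    have hp : v p ≠ p := by
      intro he
      have : p ≤ B := by
        by_contra hc2
        have : v p = p := apply_eq_of_gt h (by omega)
        omega
      omega
    have := (value_bounds h hp).2
    omega
  constructor
  · exact ⟨hAp, by omega⟩
  · exact ⟨by omega, hqB⟩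

lemma invs_finite {A B : ℤ} {v : Equiv.Perm ℤ} (h : InS A B v) : (Invs v).Finite :=
  Set.Finite.subset (Set.Finite.prod (Set.finite_Icc A B) (Set.finite_Icc A B)) (invs_subset h)

lemma InS_mul_swap {A B : ℤ} {v : Equiv.Perm ℤ} {i j : ℤ} (h : InS A B v) :
    InS (min A (min i j)) (max B (max i j)) (v * Equiv.swap i j) := by
  intro t ht
  by_cases hti : t = i
  · subst hti; constructor <;> simp <;> omega
  by_cases htj : t = j
  · subst htj; constructor <;> simp <;> omega
  · rw [Equiv.Perm.mul_apply, Equiv.swap_apply_of_ne_of_ne hti htj] at ht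
    have := h t ht
    omega

end BS

namespace BS

lemma swap_eq_i {i j p : ℤ} (h : Equiv.swap i j p = i) : p = j := by
  have h2 := congrArg (Equiv.swap i j) h
  rwa [Equiv.swap_apply_self, Equiv.swap_apply_left] at h2

lemma swap_eq_j {i j p : ℤ} (h : Equiv.swap i j p = j) : p = i := by
  have h2 := congrArg (Equiv.swap i j) h
  rwa [Equiv.swap_apply_self, Equiv.swap_apply_right] at h2

lemma swap_eq_other {i j p x : ℤ} (h : Equiv.swap i j p = x) (hx1 : x ≠ i) (hx2 : x ≠ j) :
    p = x := by
  have h2 := congrArg (Equiv.swap i j) h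
  rwa [Equiv.swap_apply_self, Equiv.swap_apply_of_ne_of_ne hx1 hx2] at h2

/-- Case analysis for the unsorted branch. -/
lemma swap_unsorted {i j p q : ℤ} (hij : i < j) (hpq : p < q)
    (h : ¬ Equiv.swap i j p < Equiv.swap i j q) :
    (p = i ∧ i < q ∧ q < j) ∨ (i < p ∧ p < j ∧ q = j) ∨ (p = i ∧ q = j) := by
  rw [Equiv.swap_apply_def, Equiv.swap_apply_def] at h
  split_ifs at h <;> omega

lemma permLength_lt_swap {v : Equiv.Perm ℤ} {i j : ℤ} (hij : i < j) (hv : v i < v j)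
    {A B : ℤ} (h : InS A B v) :
    permLength v < permLength (v * Equiv.swap i j) := by
  have hvs : ∀ t, (v * Equiv.swap i j) (Equiv.swap i j t) = v t := by
    intro t
    rw [Equiv.Perm.mul_apply, Equiv.swap_apply_self]
  have hv'i : (v * Equiv.swap i j) i = v j := by
    rw [Equiv.Perm.mul_apply, Equiv.swap_apply_left]
  have hv'j : (v * Equiv.swap i j) j = v i := by
    rw [Equiv.Perm.mul_apply, Equiv.swap_apply_right]
  have hInS' : InS (min A (min i j)) (max B (max i j)) (v * Equiv.swap i j) := InS_mul_swap h
  have hfin : (Invs v).Finite := invs_finite h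
  have hfin' : (Invs (v * Equiv.swap i j)).Finite := invs_finite hInS'
  have hmem : (i, j) ∈ Invs (v * Equiv.swap i j) := ⟨hij, by simpa [hv'i, hv'j] using hv⟩
  set ψ : ℤ × ℤ → ℤ × ℤ :=
    fun p => if Equiv.swap i j p.1 < Equiv.swap i j p.2
      then (Equiv.swap i j p.1, Equiv.swap i j p.2) else p with hψ
  have hmaps : ∀ p ∈ Invs v, ψ p ∈ Invs (v * Equiv.swap i j) \ {(i, j)} := by
    rintro ⟨p, q⟩ ⟨hpq, hval⟩
    simp only at hpq hval
    by_cases hb : Equiv.swap i j p < Equiv.swap i j q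
    · have h1 : ψ (p, q) = (Equiv.swap i j p, Equiv.swap i j q) := by simp [hψ, hb]
      rw [h1]
      refine ⟨⟨hb, ?_⟩, ?_⟩
      · simp only [hvs]; exact hval
      · simp only [Set.mem_singleton_iff, Prod.mk.injEq, not_and]
        intro hpi hqj
        have hp : p = j := swap_eq_i hpi
        have hq : q = i := swap_eq_j hqj
        omega
    · have h1 : ψ (p, q) = (p, q) := by simp [hψ, hb]
      rw [h1]
      rcases swap_unsorted hij hpq hb with ⟨hpi, hiq, hqj⟩ | ⟨hip, hpj, hqj⟩ | ⟨hpi, hqj⟩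
      · have hsq : Equiv.swap i j q = q :=
          Equiv.swap_apply_of_ne_of_ne (by omega) (by omega)
        have hq : (v * Equiv.swap i j) q = v q := by have := hvs q; rwa [hsq] at this
        rw [hpi] at hval
        refine ⟨⟨hpq, by rw [hq, hpi, hv'i]; omega⟩, ?_⟩
        simp only [Set.mem_singleton_iff, Prod.mk.injEq, not_and]
        intro _; omega
      · have hsp : Equiv.swap i j p = p :=
          Equiv.swap_apply_of_ne_of_ne (by omega) (by omega)
        have hp : (v * Equiv.swap i j) p = v p := by have := hvs p; rwa [hsp] at this
        rw [hqj] at hval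
        refine ⟨⟨hpq, by rw [hp, hqj, hv'j]; omega⟩, ?_⟩
        simp only [Set.mem_singleton_iff, Prod.mk.injEq, not_and]
        intro hc; omega
      · exfalso; rw [hpi, hqj] at hval; omega
  have hinj : Set.InjOn ψ (Invs v) := by
    rintro ⟨p, q⟩ hx ⟨p', q'⟩ hy heq
    obtain ⟨hpq, hvv⟩ := hx
    obtain ⟨hpq', hvv'⟩ := hy
    simp only at hpq hvv hpq' hvv'
    by_cases hb : Equiv.swap i j p < Equiv.swap i j q <;>
      by_cases hb' : Equiv.swap i j p' < Equiv.swap i j q'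
    · simp only [hψ, hb, hb', if_true] at heq
      obtain ⟨h1, h2⟩ := Prod.mk.injEq .. ▸ heq
      exact Prod.ext ((Equiv.swap i j).injective h1) ((Equiv.swap i j).injective h2)
    · simp only [hψ, hb, hb', if_true, if_false] at heq
      obtain ⟨h1, h2⟩ := Prod.mk.injEq .. ▸ heq
      exfalso
      rcases swap_unsorted hij hpq' hb' with ⟨hpi, hiq, hqj⟩ | ⟨hip, hpj, hqj⟩ | ⟨hpi, hqj⟩
      · have hp : p = j := swap_eq_i (h1.trans hpi)
        have hq : q = q' := swap_eq_other h2 (by omega) (by omega)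
        omega
      · have hq : q = i := swap_eq_j (h2.trans hqj)
        have hp : p = p' := swap_eq_other h1 (by omega) (by omega)
        omega
      · rw [hpi, hqj] at hvv'; omega
    · simp only [hψ, hb, hb', if_true, if_false] at heq
      obtain ⟨h1, h2⟩ := Prod.mk.injEq .. ▸ heq
      exfalso
      rcases swap_unsorted hij hpq hb with ⟨hpi, hiq, hqj⟩ | ⟨hip, hpj, hqj⟩ | ⟨hpi, hqj⟩
      · have hp' : p' = j := swap_eq_i (h1.symm.trans hpi)
        have hq' : q' = q := swap_eq_other h2.symm (by omega) (by omega)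
        omega
      · have hq' : q' = i := swap_eq_j (h2.symm.trans hqj)
        have hp' : p' = p := swap_eq_other h1.symm (by omega) (by omega)
        omega
      · rw [hpi, hqj] at hvv; omega
    · simp only [hψ, hb, hb', if_false] at heq
      exact heq
  have himg : ψ '' Invs v ⊆ Invs (v * Equiv.swap i j) \ {(i, j)} := by
    rintro x ⟨y, hy, rfl⟩
    exact hmaps y hy
  have hfin2 : (Invs (v * Equiv.swap i j) \ {(i, j)}).Finite := hfin'.diff
  calc permLength v = (ψ '' Invs v).ncard := (Set.ncard_image_of_injOn hinj).symm
    _ ≤ (Invs (v * Equiv.swap i j) \ {(i, j)}).ncard := Set.ncard_le_ncard himg hfin2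
    _ < (Invs (v * Equiv.swap i j)).ncard := by
        have := Set.ncard_diff_singleton_add_one hmem hfin'
        omega

lemma swap_cover_lt {v : Equiv.Perm ℤ} {i j A B : ℤ} (h : InS A B v) (hij : i < j)
    (hlen : permLength (v * Equiv.swap i j) = permLength v + 1) : v i < v j := by
  have hne : v i ≠ v j := fun he => (by omega : i ≠ j) (v.injective he)
  rcases lt_or_gt_of_ne hne with h1 | h1
  · exact h1
  · exfalso
    have h2i : (v * Equiv.swap i j) i = v j := by
      rw [Equiv.Perm.mul_apply, Equiv.swap_apply_left]
    have h2j : (v * Equiv.swap i j) j = v i := by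
      rw [Equiv.Perm.mul_apply, Equiv.swap_apply_right]
    have hI : InS (min A (min i j)) (max B (max i j)) (v * Equiv.swap i j) := InS_mul_swap h
    have hlt := permLength_lt_swap hij (by omega : (v * Equiv.swap i j) i < (v * Equiv.swap i j) j) hI
    have hvv : v * Equiv.swap i j * Equiv.swap i j = v := by
      rw [mul_assoc, Equiv.swap_mul_self, mul_one]
    rw [hvv] at hlt
    omega

end BS
namespace BS

def rho (k n : ℤ) : Equiv.Perm ℤ where
  toFun t := if k ≤ n then (if t = k+1 then n+1 else if k+2 ≤ t ∧ t ≤ n+1 then t-1 else t) else t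
  invFun t := if k ≤ n then (if t = n+1 then k+1 else if k+1 ≤ t ∧ t ≤ n then t+1 else t) else t
  left_inv := by intro t; by_cases h : k ≤ n <;> simp only [h, if_true, if_false] <;> split_ifs <;> omega
  right_inv := by intro t; by_cases h : k ≤ n <;> simp only [h, if_true, if_false] <;> split_ifs <;> omega

variable {k n : ℤ}

lemma rho_apply (hkn : k ≤ n) (t : ℤ) :
    rho k n t = if t = k+1 then n+1 else if k+2 ≤ t ∧ t ≤ n+1 then t-1 else t := by
  show (if k ≤ n then _ else _) = _
  rw [if_pos hkn]

lemma rho_low (hkn : k ≤ n) {t : ℤ} (ht : t ≤ k) : rho k n t = t := by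
  rw [rho_apply hkn]; split_ifs <;> omega

lemma rho_k1 (hkn : k ≤ n) : rho k n (k+1) = n+1 := by
  rw [rho_apply hkn]; split_ifs <;> omega

lemma rho_mid (hkn : k ≤ n) {t : ℤ} (h1 : k+2 ≤ t) (h2 : t ≤ n+1) : rho k n t = t - 1 := by
  rw [rho_apply hkn]; split_ifs <;> omega

lemma rho_high (hkn : k ≤ n) {t : ℤ} (ht : n+1 < t) : rho k n t = t := by
  rw [rho_apply hkn]; split_ifs <;> omega

lemma sigma_apply (hkn : k ≤ n) (t : ℤ) :
    (rho k n)⁻¹ t = if t = n+1 then k+1 else if k+1 ≤ t ∧ t ≤ n then t+1 else t := by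
  show (rho k n).symm t = _
  show (if k ≤ n then _ else _) = _
  rw [if_pos hkn]

lemma sigma_low (hkn : k ≤ n) {t : ℤ} (ht : t ≤ k) : (rho k n)⁻¹ t = t := by
  rw [sigma_apply hkn]; split_ifs <;> omega

lemma sigma_mid (hkn : k ≤ n) {t : ℤ} (h1 : k+1 ≤ t) (h2 : t ≤ n) : (rho k n)⁻¹ t = t + 1 := by
  rw [sigma_apply hkn]; split_ifs <;> omega

lemma sigma_top (hkn : k ≤ n) : (rho k n)⁻¹ (n+1) = k+1 := by
  rw [sigma_apply hkn]; split_ifs <;> omega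

lemma sigma_high (hkn : k ≤ n) {t : ℤ} (ht : n+1 < t) : (rho k n)⁻¹ t = t := by
  rw [sigma_apply hkn]; split_ifs <;> omega

end BS

namespace BS

lemma InS_mul_rho {a n k : ℤ} {v : Equiv.Perm ℤ} (hak : a ≤ k) (hkn : k ≤ n - 1)
    (hv : InS a n v) : InS a (n+1) (v * rho k n) := by
  have hkn' : k ≤ n := by omega
  intro t ht
  rw [Equiv.Perm.mul_apply] at ht
  constructor
  · by_contra hc
    push_neg at hc
    rw [rho_low hkn' (by omega)] at ht
    exact ht (apply_eq_of_lt hv hc)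
  · by_contra hc
    push_neg at hc
    rw [rho_high hkn' (by omega)] at ht
    exact ht (apply_eq_of_gt hv (by omega))

lemma permLength_mul_rho {a n k : ℤ} {v : Equiv.Perm ℤ} (hak : a ≤ k) (hkn : k ≤ n - 1)
    (hv : InS a n v) :
    permLength (v * rho k n) = permLength v + (n - k).toNat := by
  have hkn' : k ≤ n := by omega
  have hIn' : InS a (n+1) (v * rho k n) := InS_mul_rho hak hkn hv
  have hvtop : v (n+1) = n+1 := apply_eq_of_gt hv (by omega)
  set S1 : Set (ℤ × ℤ) :=
    (fun p : ℤ × ℤ => ((rho k n)⁻¹ p.1, (rho k n)⁻¹ p.2)) '' Invs v with hS1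
  set S2 : Set (ℤ × ℤ) := (fun t : ℤ => ((k+1 : ℤ), t)) '' Set.Icc (k+2) (n+1) with hS2
  have hsub := invs_subset hv
  have hkey : Invs (v * rho k n) = S1 ∪ S2 := by
    ext ⟨p, q⟩
    constructor
    · rintro ⟨hpq, hval⟩
      simp only at hpq hval
      have hbounds := invs_subset hIn' (show (p,q) ∈ Invs (v * rho k n) from ⟨hpq, hval⟩)
      simp only [Set.mem_prod, Set.mem_Icc] at hbounds
      obtain ⟨⟨hap, hpn⟩, ⟨haq, hqn⟩⟩ := hbounds
      rw [Equiv.Perm.mul_apply, Equiv.Perm.mul_apply] at hval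
      by_cases hq : q = k + 1
      · exfalso
        rw [hq, rho_k1 hkn', hvtop] at hval
        have hpk : p ≤ k := by omega
        rw [rho_low hkn' hpk] at hval
        have := apply_le hv (show p ≤ n by omega)
        omega
      · by_cases hp : p = k + 1
        · right
          refine ⟨q, ⟨by omega, by omega⟩, ?_⟩
          rw [hp]
        · left
          have hqk : q ≠ k + 1 := hq
          have hp₀ : (p ≤ k ∧ rho k n p = p) ∨ (k+2 ≤ p ∧ p ≤ n+1 ∧ rho k n p = p - 1) := by
            by_cases h1 : p ≤ k
            · exact Or.inl ⟨h1, rho_low hkn' h1⟩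
            · exact Or.inr ⟨by omega, by omega, rho_mid hkn' (by omega) (by omega)⟩
          have hq₀ : (q ≤ k ∧ rho k n q = q) ∨ (k+2 ≤ q ∧ q ≤ n+1 ∧ rho k n q = q - 1) := by
            by_cases h1 : q ≤ k
            · exact Or.inl ⟨h1, rho_low hkn' h1⟩
            · exact Or.inr ⟨by omega, by omega, rho_mid hkn' (by omega) (by omega)⟩
          have hlt : rho k n p < rho k n q := by
            rcases hp₀ with ⟨h1, h2⟩ | ⟨h1, h1', h2⟩ <;> rcases hq₀ with ⟨g1, g2⟩ | ⟨g1, g1', g2⟩ <;>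
              rw [h2, g2] <;> omega
          refine ⟨(rho k n p, rho k n q), ⟨hlt, hval⟩, ?_⟩
          simp [Equiv.Perm.inv_def]
    · rintro (⟨⟨p₀, q₀⟩, ⟨hpq₀, hval₀⟩, heq⟩ | ⟨t, ⟨ht1, ht2⟩, heq⟩)
      · simp only at hpq₀ hval₀
        have hb := hsub (show (p₀,q₀) ∈ Invs v from ⟨hpq₀, hval₀⟩)
        simp only [Set.mem_prod, Set.mem_Icc] at hb
        obtain ⟨⟨h1, h2⟩, ⟨h3, h4⟩⟩ := hb
        simp only at heq
        obtain ⟨hep, heq2⟩ := Prod.mk.injEq .. ▸ heq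
        have hσp : ((rho k n)⁻¹ p₀ = p₀ ∧ p₀ ≤ k) ∨ ((rho k n)⁻¹ p₀ = p₀ + 1 ∧ k+1 ≤ p₀) := by
          by_cases hc : p₀ ≤ k
          · exact Or.inl ⟨sigma_low hkn' hc, hc⟩
          · exact Or.inr ⟨sigma_mid hkn' (by omega) (by omega), by omega⟩
        have hσq : ((rho k n)⁻¹ q₀ = q₀ ∧ q₀ ≤ k) ∨ ((rho k n)⁻¹ q₀ = q₀ + 1 ∧ k+1 ≤ q₀) := by
          by_cases hc : q₀ ≤ k
          · exact Or.inl ⟨sigma_low hkn' hc, hc⟩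
          · exact Or.inr ⟨sigma_mid hkn' (by omega) (by omega), by omega⟩
        constructor
        · simp only [← hep, ← heq2]
          rcases hσp with ⟨e1, e2⟩ | ⟨e1, e2⟩ <;> rcases hσq with ⟨f1, f2⟩ | ⟨f1, f2⟩ <;>
            rw [e1, f1] <;> omega
        · simp only [← hep, ← heq2, Equiv.Perm.mul_apply, Equiv.Perm.inv_def, Equiv.apply_symm_apply]
          exact hval₀
      · simp only at heq
        obtain ⟨hep, heq2⟩ := Prod.mk.injEq .. ▸ heq
        constructor
        · simp only [← hep, ← heq2]; omega
        · simp only [← hep, ← heq2, Equiv.Perm.mul_apply, rho_k1 hkn', hvtop,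
            rho_mid hkn' ht1 ht2]
          have : v (t - 1) ≤ n := apply_le hv (by omega)
          omega
  have hinj1 : Function.Injective (fun p : ℤ × ℤ => ((rho k n)⁻¹ p.1, (rho k n)⁻¹ p.2)) := by
    rintro ⟨x1, x2⟩ ⟨y1, y2⟩ hxy
    simp only [Prod.mk.injEq] at hxy
    exact Prod.ext ((rho k n)⁻¹.injective hxy.1) ((rho k n)⁻¹.injective hxy.2)
  have hfin1 : S1.Finite := (invs_finite hv).image _
  have hfin2 : S2.Finite := (Set.finite_Icc _ _).image _
  have hdisj : Disjoint S1 S2 := by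
    rw [Set.disjoint_left]
    rintro ⟨p, q⟩ ⟨⟨p₀, q₀⟩, hmem₀, heq⟩ ⟨t, ht, heq'⟩
    simp only at heq heq'
    obtain ⟨he1, _⟩ := Prod.mk.injEq .. ▸ heq
    obtain ⟨he1', _⟩ := Prod.mk.injEq .. ▸ heq'
    have hb := hsub hmem₀
    simp only [Set.mem_prod, Set.mem_Icc] at hb
    obtain ⟨⟨h1, h2⟩, _⟩ := hb
    have : (rho k n)⁻¹ p₀ ≠ k + 1 := by
      by_cases hc : p₀ ≤ k
      · rw [sigma_low hkn' hc]; omega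
      · rw [sigma_mid hkn' (by omega) (by omega)]; omega
    rw [he1] at this
    omega
  have hcard2 : S2.ncard = (n - k).toNat := by
    rw [hS2, Set.ncard_image_of_injective _ (fun x y h => by simpa using h),
      ← Finset.coe_Icc, Set.ncard_coe_finset, Int.card_Icc]
    omega
  rw [permLength_def, permLength_def, hkey, Set.ncard_union_eq hdisj hfin1 hfin2,
    hS1, Set.ncard_image_of_injective _ hinj1, hcard2]

end BS

namespace BS

lemma untouched {us : ℕ → Equiv.Perm ℤ} {ab : ℕ → ℤ × ℤ} {m : ℕ}
    (hstep : ∀ j < m, us (j+1) = us j * Equiv.swap (ab j).1 (ab j).2)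
    {p : ℤ} {i1 i2 : ℕ} (h12 : i1 ≤ i2) (h2m : i2 ≤ m)
    (hp : ∀ j, i1 ≤ j → j < i2 → (ab j).1 ≠ p ∧ (ab j).2 ≠ p) :
    us i2 p = us i1 p := by
  induction i2, h12 using Nat.le_induction with
  | base => rfl
  | succ i2 h ih =>
      have h1 : us (i2+1) p = us i2 p := by
        rw [hstep i2 (by omega), Equiv.Perm.mul_apply,
          Equiv.swap_apply_of_ne_of_ne (Ne.symm (hp i2 h (by omega)).1)
            (Ne.symm (hp i2 h (by omega)).2)]
      rw [h1]
      exact ih (by omega) (fun j hj1 hj2 => hp j hj1 (by omega))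

lemma chain_bound {us : ℕ → Equiv.Perm ℤ} {ab : ℕ → ℤ × ℤ} {m : ℕ}
    (hstep : ∀ j < m, us (j+1) = us j * Equiv.swap (ab j).1 (ab j).2)
    {a n : ℤ} (h0 : InS a n (us 0)) : ∀ i ≤ m, ∃ A B, InS A B (us i) := by
  intro i
  induction i with
  | zero => exact fun _ => ⟨a, n, h0⟩
  | succ i ih =>
      intro h
      obtain ⟨A, B, hAB⟩ := ih (by omega)
      rw [hstep i (by omega)]
      exact ⟨_, _, InS_mul_swap hAB⟩

/-- No step of an increasing chain can use a column beyond `n`. -/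
lemma chain_snd_le {a n k : ℤ} {m : ℕ} {us : ℕ → Equiv.Perm ℤ} {ab : ℕ → ℤ × ℤ}
    (hu : InS a n (us 0)) (hw : InS a n (us m)) (hkn : k ≤ n)
    (hcov : ∀ i < m, (ab i).1 ≤ k ∧ k < (ab i).2 ∧
      us (i + 1) = us i * Equiv.swap (ab i).1 (ab i).2 ∧
      permLength (us (i + 1)) = permLength (us i) + 1)
    (hinc : ∀ i j : ℕ, i < j → j < m → us i (ab i).1 < us j (ab j).1) :
    ∀ i < m, (ab i).2 ≤ n := by
  have hstep : ∀ j < m, us (j+1) = us j * Equiv.swap (ab j).1 (ab j).2 :=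
    fun j hj => (hcov j hj).2.2.1
  intro i him
  by_contra hq
  push_neg at hq
  set q := (ab i).2 with hqdef
  have hT : ∀ j, j ∈ (Finset.range m).filter (fun j => (ab j).2 = q) ↔ j < m ∧ (ab j).2 = q := by
    intro j; simp [Finset.mem_filter, Finset.mem_range]
  set T := (Finset.range m).filter (fun j => (ab j).2 = q) with hTdef
  have hTne : T.Nonempty := ⟨i, (hT i).2 ⟨him, rfl⟩⟩
  set j₀ := T.min' hTne with hj₀def
  set i₀ := T.max' hTne with hi₀def
  obtain ⟨hj₀m, hj₀q⟩ := (hT j₀).1 (T.min'_mem hTne)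
  obtain ⟨hi₀m, hi₀q⟩ := (hT i₀).1 (T.max'_mem hTne)
  -- value at q before first touch
  have h1 : us j₀ q = us 0 q := by
    apply untouched hstep (by omega) (by omega)
    intro j hj1 hj2
    constructor
    · have := (hcov j (by omega)).1; omega
    · intro he
      have : j₀ ≤ j := T.min'_le j ((hT j).2 ⟨by omega, he⟩)
      omega
  have h2 : us 0 q = q := by
    by_contra hc
    have := hu q hc
    omega
  -- cover at j₀ : recorded value < q
  have hcovj₀ := hcov j₀ hj₀m
  obtain ⟨A, B, hAB⟩ := chain_bound hstep hu j₀ (by omega)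
  have h3 : us j₀ (ab j₀).1 < us j₀ q := by
    have := swap_cover_lt hAB (show (ab j₀).1 < (ab j₀).2 by omega) (hcovj₀.2.2.1 ▸ hcovj₀.2.2.2)
    rwa [hj₀q] at this
  -- value at q after last touch
  have hcovi₀ := hcov i₀ hi₀m
  have h4 : us (i₀+1) q = us i₀ (ab i₀).1 := by
    rw [hcovi₀.2.2.1, Equiv.Perm.mul_apply, ← hi₀q, Equiv.swap_apply_right]
  have h5 : us m q = us (i₀+1) q := by
    apply untouched hstep (by omega) (by omega)
    intro j hj1 hj2
    constructor
    · have := (hcov j (by omega)).1; omega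
    · intro he
      have : j ≤ i₀ := T.le_max' j ((hT j).2 ⟨by omega, he⟩)
      omega
  have h6 : us m q = q := by
    by_contra hc
    have := hw q hc
    omega
  have h7 : us i₀ (ab i₀).1 = q := by omega
  obtain ⟨A', B', hAB'⟩ := chain_bound hstep hu i₀ (by omega)
  have h8 : q < us i₀ q := by
    have := swap_cover_lt hAB' (show (ab i₀).1 < (ab i₀).2 by omega) (hcovi₀.2.2.1 ▸ hcovi₀.2.2.2)
    rwa [hi₀q, h7] at this
  by_cases hji : j₀ = i₀
  · rw [hji, h2] at h1
    omega
  · have hj₀i₀ : j₀ < i₀ := by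
      have := T.min'_le i₀ (T.max'_mem hTne)
      omega
    have hT' : ∀ j, j ∈ T.filter (fun j => j < i₀) ↔ (j < m ∧ (ab j).2 = q) ∧ j < i₀ := by
      intro j; rw [Finset.mem_filter, hT j]
    have hT'ne : (T.filter (fun j => j < i₀)).Nonempty :=
      ⟨j₀, (hT' j₀).2 ⟨⟨hj₀m, hj₀q⟩, hj₀i₀⟩⟩
    set j₁ := (T.filter (fun j => j < i₀)).max' hT'ne with hj₁def
    obtain ⟨⟨hj₁m, hj₁q⟩, hj₁i₀⟩ := (hT' j₁).1 ((T.filter _).max'_mem hT'ne)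
    have h9 : us i₀ q = us (j₁+1) q := by
      apply untouched hstep (by omega) (by omega)
      intro j hj1 hj2
      constructor
      · have := (hcov j (by omega)).1; omega
      · intro he
        have : j ≤ j₁ := (T.filter _).le_max' j ((hT' j).2 ⟨⟨by omega, he⟩, by omega⟩)
        omega
    have h10 : us (j₁+1) q = us j₁ (ab j₁).1 := by
      rw [(hcov j₁ hj₁m).2.2.1, Equiv.Perm.mul_apply, ← hj₁q, Equiv.swap_apply_right]
    have h11 := hinc j₁ i₀ hj₁i₀ hi₀m
    omega

/-- No step of an increasing chain can use a row before `a`. -/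
lemma chain_fst_ge {a n k : ℤ} {m : ℕ} {us : ℕ → Equiv.Perm ℤ} {ab : ℕ → ℤ × ℤ}
    (hu : InS a n (us 0)) (hw : InS a n (us m)) (hak : a ≤ k)
    (hcov : ∀ i < m, (ab i).1 ≤ k ∧ k < (ab i).2 ∧
      us (i + 1) = us i * Equiv.swap (ab i).1 (ab i).2 ∧
      permLength (us (i + 1)) = permLength (us i) + 1)
    (hinc : ∀ i j : ℕ, i < j → j < m → us i (ab i).1 < us j (ab j).1) :
    ∀ i < m, a ≤ (ab i).1 := by
  have hstep : ∀ j < m, us (j+1) = us j * Equiv.swap (ab j).1 (ab j).2 :=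
    fun j hj => (hcov j hj).2.2.1
  intro i him
  by_contra hp
  push_neg at hp
  set p := (ab i).1 with hpdef
  have hT : ∀ j, j ∈ (Finset.range m).filter (fun j => (ab j).1 = p) ↔ j < m ∧ (ab j).1 = p := by
    intro j; simp [Finset.mem_filter, Finset.mem_range]
  set T := (Finset.range m).filter (fun j => (ab j).1 = p) with hTdef
  have hTne : T.Nonempty := ⟨i, (hT i).2 ⟨him, rfl⟩⟩
  set j₀ := T.min' hTne with hj₀def
  set i₀ := T.max' hTne with hi₀def
  obtain ⟨hj₀m, hj₀p⟩ := (hT j₀).1 (T.min'_mem hTne)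
  obtain ⟨hi₀m, hi₀p⟩ := (hT i₀).1 (T.max'_mem hTne)
  have h1 : us j₀ p = us 0 p := by
    apply untouched hstep (by omega) (by omega)
    intro j hj1 hj2
    constructor
    · intro he
      have : j₀ ≤ j := T.min'_le j ((hT j).2 ⟨by omega, he⟩)
      omega
    · have := (hcov j (by omega)).2.1; omega
  have h2 : us 0 p = p := by
    by_contra hc
    have := hu p hc
    omega
  have hcovj₀ := hcov j₀ hj₀m
  obtain ⟨A, B, hAB⟩ := chain_bound hstep hu j₀ (by omega)
  have h3 : us j₀ p < us j₀ (ab j₀).2 := by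
    have := swap_cover_lt hAB (show (ab j₀).1 < (ab j₀).2 by omega) (hcovj₀.2.2.1 ▸ hcovj₀.2.2.2)
    rwa [hj₀p] at this
  have hcovi₀ := hcov i₀ hi₀m
  have h4 : us (i₀+1) p = us i₀ (ab i₀).2 := by
    rw [hcovi₀.2.2.1, Equiv.Perm.mul_apply, ← hi₀p, Equiv.swap_apply_left]
  have h5 : us m p = us (i₀+1) p := by
    apply untouched hstep (by omega) (by omega)
    intro j hj1 hj2
    constructor
    · intro he
      have : j ≤ i₀ := T.le_max' j ((hT j).2 ⟨by omega, he⟩)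
      omega
    · have := (hcov j (by omega)).2.1; omega
  have h6 : us m p = p := by
    by_contra hc
    have := hw p hc
    omega
  have h7 : us i₀ (ab i₀).2 = p := by omega
  obtain ⟨A', B', hAB'⟩ := chain_bound hstep hu i₀ (by omega)
  have h8 : us i₀ p < p := by
    have := swap_cover_lt hAB' (show (ab i₀).1 < (ab i₀).2 by omega) (hcovi₀.2.2.1 ▸ hcovi₀.2.2.2)
    rwa [hi₀p, h7] at this
  by_cases hji : j₀ = i₀
  · rw [hji] at h1
    omega
  · have hj₀i₀ : j₀ < i₀ := by
      have := T.min'_le i₀ (T.max'_mem hTne)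
      omega
    have h11 := hinc j₀ i₀ hj₀i₀ hi₀m
    rw [hj₀p, hi₀p, h1, h2] at h11
    omega

/-- All intermediate permutations stay in `S_{[a,n]}`. -/
lemma chain_InS {a n k : ℤ} {m : ℕ} {us : ℕ → Equiv.Perm ℤ} {ab : ℕ → ℤ × ℤ}
    (hu : InS a n (us 0)) (hkn : k ≤ n)
    (hcov : ∀ i < m, (ab i).1 ≤ k ∧ k < (ab i).2 ∧
      us (i + 1) = us i * Equiv.swap (ab i).1 (ab i).2 ∧
      permLength (us (i + 1)) = permLength (us i) + 1)
    (hb : ∀ i < m, (ab i).2 ≤ n) (ha : ∀ i < m, a ≤ (ab i).1) :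
    ∀ i ≤ m, InS a n (us i) := by
  intro i
  induction i with
  | zero => exact fun _ => hu
  | succ i ih =>
      intro h
      have hi : i < m := by omega
      have hIH := ih (by omega)
      intro t ht
      rw [(hcov i hi).2.2.1, Equiv.Perm.mul_apply] at ht
      by_cases h1 : t = (ab i).1
      · have := (hcov i hi).1
        have := ha i hi
        omega
      · by_cases h2 : t = (ab i).2
        · have := (hcov i hi).2.1
          have := hb i hi
          have := ha i hi
          have := (hcov i hi).1
          omega
        · rw [Equiv.swap_apply_of_ne_of_ne h1 h2] at ht
          exact hIH t ht

end BS

namespace BS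

lemma InS_mul_rho_inv {a n k : ℤ} {v : Equiv.Perm ℤ} (hak : a ≤ k) (hkn : k ≤ n - 1)
    (hv : InS a (n+1) v) (hval : v (k+1) = n+1) : InS a n (v * (rho k n)⁻¹) := by
  have hkn' : k ≤ n := by omega
  intro t ht
  rw [Equiv.Perm.mul_apply] at ht
  constructor
  · by_contra hc
    push_neg at hc
    rw [sigma_low hkn' (by omega)] at ht
    exact ht (apply_eq_of_lt hv hc)
  · by_contra hc
    push_neg at hc
    by_cases he : t = n + 1
    · rw [he, sigma_top hkn', hval] at ht
      exact ht rfl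
    · rw [sigma_high hkn' (by omega)] at ht
      exact ht (apply_eq_of_gt hv (by omega))

lemma eq_mul_rho {a n k : ℤ} {u u' : Equiv.Perm ℤ} (hak : a ≤ k) (hkn : k ≤ n - 1)
    (hu : InS a n u) (hu' : InS a (n+1) u')
    (h1 : ∀ t : ℤ, a ≤ t → t ≤ k → u' t = u t) (h2 : u' (k+1) = n+1)
    (h3 : ∀ t : ℤ, k+1 < t → t ≤ n+1 → u' t = u (t-1)) :
    u' = u * rho k n := by
  have hkn' : k ≤ n := by omega
  ext t
  rw [Equiv.Perm.mul_apply]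
  by_cases hc1 : t < a
  · rw [rho_low hkn' (by omega), apply_eq_of_lt hu' hc1, apply_eq_of_lt hu hc1]
  by_cases hc2 : t ≤ k
  · rw [rho_low hkn' hc2]
    exact h1 t (by omega) hc2
  by_cases hc3 : t = k + 1
  · rw [hc3, rho_k1 hkn', h2, apply_eq_of_gt hu (by omega)]
  by_cases hc4 : t ≤ n + 1
  · rw [rho_mid hkn' (by omega) hc4]
    exact h3 t (by omega) hc4
  · rw [rho_high hkn' (by omega), apply_eq_of_gt hu' (by omega : (n:ℤ)+1 < t),
      apply_eq_of_gt hu (by omega)]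

end BS

open BS in
theorem incto_aux (a n k : ℤ) (hak : a ≤ k) (hkn : k ≤ n - 1)
    (u w u' w' : Equiv.Perm ℤ) (hu : InS a n u) (hw : InS a n w)
    (hu' : InS a (n + 1) u') (hw' : InS a (n + 1) w')
    (hu'1 : ∀ t : ℤ, a ≤ t → t ≤ k → u' t = u t)
    (hu'2 : u' (k + 1) = n + 1)
    (hu'3 : ∀ t : ℤ, k + 1 < t → t ≤ n + 1 → u' t = u (t - 1))
    (hw'1 : ∀ t : ℤ, a ≤ t → t ≤ k → w' t = w t)
    (hw'2 : w' (k + 1) = n + 1)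
    (hw'3 : ∀ t : ℤ, k + 1 < t → t ≤ n + 1 → w' t = w (t - 1)) :
    (∃ (m : ℕ) (us : ℕ → Equiv.Perm ℤ) (ab : ℕ → ℤ × ℤ),
    us 0 = u ∧ us m = w ∧
    (∀ i < m, (ab i).1 ≤ k ∧ k < (ab i).2 ∧
      us (i + 1) = us i * Equiv.swap (ab i).1 (ab i).2 ∧
      permLength (us (i + 1)) = permLength (us i) + 1) ∧
    (∀ i j : ℕ, i < j → j < m → us i (ab i).1 < us j (ab j).1)) ↔
    (∃ (m : ℕ) (us : ℕ → Equiv.Perm ℤ) (ab : ℕ → ℤ × ℤ),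
    us 0 = u' ∧ us m = w' ∧
    (∀ i < m, (ab i).1 ≤ k + 1 ∧ k + 1 < (ab i).2 ∧
      us (i + 1) = us i * Equiv.swap (ab i).1 (ab i).2 ∧
      permLength (us (i + 1)) = permLength (us i) + 1) ∧
    (∀ i j : ℕ, i < j → j < m → us i (ab i).1 < us j (ab j).1)) := by
  have hkn' : k ≤ n := by omega
  have hueq : u' = u * rho k n := eq_mul_rho hak hkn hu hu' hu'1 hu'2 hu'3
  have hweq : w' = w * rho k n := eq_mul_rho hak hkn hw hw' hw'1 hw'2 hw'3
  constructor
  · rintro ⟨m, us, ab, h0, hm, hcov, hinc⟩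
    have hu0 : InS a n (us 0) := by rw [h0]; exact hu
    have hwm : InS a n (us m) := by rw [hm]; exact hw
    have hb := chain_snd_le hu0 hwm hkn' hcov hinc
    have ha := chain_fst_ge hu0 hwm hak hcov hinc
    have hIn := chain_InS hu0 hkn' hcov hb ha
    refine ⟨m, fun i => us i * rho k n, fun i => ((ab i).1, (ab i).2 + 1), ?_, ?_, ?_, ?_⟩
    · show us 0 * rho k n = u'
      rw [h0, hueq]
    · show us m * rho k n = w'
      rw [hm, hweq]
    · intro i hi
      obtain ⟨hc1, hc2, hc3, hc4⟩ := hcov i hi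
      have hbi := hb i hi
      have hai := ha i hi
      refine ⟨by show (ab i).1 ≤ k + 1; omega, by show k + 1 < (ab i).2 + 1; omega, ?_, ?_⟩
      · show us (i+1) * rho k n = us i * rho k n * Equiv.swap (ab i).1 ((ab i).2 + 1)
        have e1 : (rho k n)⁻¹ (ab i).1 = (ab i).1 := sigma_low hkn' hc1
        have e2 : (rho k n)⁻¹ (ab i).2 = (ab i).2 + 1 := sigma_mid hkn' (by omega) (by omega)
        have hswap : Equiv.swap ((ab i).1) ((ab i).2 + 1) =
            (rho k n)⁻¹ * Equiv.swap (ab i).1 (ab i).2 * ((rho k n)⁻¹)⁻¹ := by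
          calc Equiv.swap ((ab i).1) ((ab i).2 + 1)
              = Equiv.swap ((rho k n)⁻¹ (ab i).1) ((rho k n)⁻¹ (ab i).2) := by rw [e1, e2]
            _ = (rho k n)⁻¹ * Equiv.swap (ab i).1 (ab i).2 * ((rho k n)⁻¹)⁻¹ :=
                Equiv.swap_apply_apply _ _ _
        rw [hc3, hswap]
        group
      · show permLength (us (i+1) * rho k n) = permLength (us i * rho k n) + 1
        rw [permLength_mul_rho hak hkn (hIn (i+1) (by omega)),
          permLength_mul_rho hak hkn (hIn i (by omega)), hc4]
        omega
    · intro i j hij hjm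
      show (us i * rho k n) (ab i).1 < (us j * rho k n) (ab j).1
      rw [Equiv.Perm.mul_apply, Equiv.Perm.mul_apply,
        rho_low hkn' (hcov i (by omega)).1, rho_low hkn' (hcov j hjm).1]
      exact hinc i j hij hjm
  · rintro ⟨m, us, ab, h0, hm, hcov, hinc⟩
    have hstep : ∀ j < m, us (j+1) = us j * Equiv.swap (ab j).1 (ab j).2 :=
      fun j hj => (hcov j hj).2.2.1
    have hu0 : InS a (n+1) (us 0) := by rw [h0]; exact hu'
    have hwm : InS a (n+1) (us m) := by rw [hm]; exact hw'
    have hb := chain_snd_le hu0 hwm (show k+1 ≤ n+1 by omega) hcov hinc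
    have ha := chain_fst_ge hu0 hwm (show a ≤ k+1 by omega) hcov hinc
    have hIn := chain_InS hu0 (show k+1 ≤ n+1 by omega) hcov hb ha
    have hkey : ∀ i ≤ m, us i (k+1) = n+1 := by
      intro i
      induction i with
      | zero => intro _; rw [h0]; exact hu'2
      | succ i ih =>
          intro h
          have hi : i < m := by omega
          have hk1 := ih (by omega)
          obtain ⟨hc1, hc2, hc3, hc4⟩ := hcov i hi
          have ha1 : (ab i).1 ≠ k+1 := by
            intro he
            have hlt := swap_cover_lt (hIn i (by omega))
              (show (ab i).1 < (ab i).2 by omega) (hc3 ▸ hc4)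
            rw [he, hk1] at hlt
            have h2 := apply_le (hIn i (by omega)) (show (ab i).2 ≤ n+1 from hb i hi)
            omega
          rw [hc3, Equiv.Perm.mul_apply,
            Equiv.swap_apply_of_ne_of_ne (Ne.symm ha1) (by omega)]
          exact hk1
    have hA : ∀ i < m, (ab i).1 ≤ k := by
      intro i hi
      by_contra hc
      obtain ⟨hc1, hc2, hc3, hc4⟩ := hcov i hi
      have he : (ab i).1 = k+1 := by omega
      have hlt := swap_cover_lt (hIn i (by omega))
        (show (ab i).1 < (ab i).2 by omega) (hc3 ▸ hc4)
      rw [he, hkey i (by omega)] at hlt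
      have h2 := apply_le (hIn i (by omega)) (show (ab i).2 ≤ n+1 from hb i hi)
      omega
    have hvsI : ∀ i ≤ m, InS a n (us i * (rho k n)⁻¹) :=
      fun i h => InS_mul_rho_inv hak hkn (hIn i h) (hkey i h)
    refine ⟨m, fun i => us i * (rho k n)⁻¹, fun i => ((ab i).1, (ab i).2 - 1), ?_, ?_, ?_, ?_⟩
    · show us 0 * (rho k n)⁻¹ = u
      rw [h0, hueq, mul_inv_cancel_right]
    · show us m * (rho k n)⁻¹ = w
      rw [hm, hweq, mul_inv_cancel_right]
    · intro i hi
      obtain ⟨hc1, hc2, hc3, hc4⟩ := hcov i hi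
      have hAi := hA i hi
      have hbi := hb i hi
      refine ⟨by show (ab i).1 ≤ k; omega, by show k < (ab i).2 - 1; omega, ?_, ?_⟩
      · show us (i+1) * (rho k n)⁻¹ = us i * (rho k n)⁻¹ * Equiv.swap (ab i).1 ((ab i).2 - 1)
        have e1 : rho k n (ab i).1 = (ab i).1 := rho_low hkn' hAi
        have e2 : rho k n (ab i).2 = (ab i).2 - 1 := rho_mid hkn' (by omega) (by omega)
        have hswap : Equiv.swap ((ab i).1) ((ab i).2 - 1) =
            rho k n * Equiv.swap (ab i).1 (ab i).2 * (rho k n)⁻¹ := by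
          calc Equiv.swap ((ab i).1) ((ab i).2 - 1)
              = Equiv.swap (rho k n (ab i).1) (rho k n (ab i).2) := by rw [e1, e2]
            _ = rho k n * Equiv.swap (ab i).1 (ab i).2 * (rho k n)⁻¹ :=
                Equiv.swap_apply_apply _ _ _
        rw [hc3, hswap]
        group
      · show permLength (us (i+1) * (rho k n)⁻¹) = permLength (us i * (rho k n)⁻¹) + 1
        have l1 := permLength_mul_rho hak hkn (hvsI i (by omega))
        have l2 := permLength_mul_rho hak hkn (hvsI (i+1) (by omega))
        rw [inv_mul_cancel_right] at l1 l2
        omega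
    · intro i j hij hjm
      show (us i * (rho k n)⁻¹) (ab i).1 < (us j * (rho k n)⁻¹) (ab j).1
      rw [Equiv.Perm.mul_apply, Equiv.Perm.mul_apply,
        sigma_low hkn' (hA i (by omega)), sigma_low hkn' (hA j hjm)]
      exact hinc i j hij hjm

theorem stmt14 (a n k : ℤ) (hak : a ≤ k) (hkn : k ≤ n - 1)
    (u w u' w' : Equiv.Perm ℤ) (hu : InS a n u) (hw : InS a n w)
    (hu' : InS a (n + 1) u') (hw' : InS a (n + 1) w')
    (hu'1 : ∀ t : ℤ, a ≤ t → t ≤ k → u' t = u t)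
    (hu'2 : u' (k + 1) = n + 1)
    (hu'3 : ∀ t : ℤ, k + 1 < t → t ≤ n + 1 → u' t = u (t - 1))
    (hw'1 : ∀ t : ℤ, a ≤ t → t ≤ k → w' t = w t)
    (hw'2 : w' (k + 1) = n + 1)
    (hw'3 : ∀ t : ℤ, k + 1 < t → t ≤ n + 1 → w' t = w (t - 1)) :
    IncTo k u w ↔ IncTo (k + 1) u' w' := by
  exact incto_aux a n k hak hkn u w u' w' hu hw hu' hw' hu'1 hu'2 hu'3 hw'1 hw'2 hw'3
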